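/- Let (Y,μ) be a finite measure space, let 0 < δ < 1, and let f : Y → ℝ be a measurable function such that for all real nonzero λ one has |∫_Y e^{iλ f(y)} dμ(y)| ≤ A|λ|^{-δ}. Then for each c ∈ ℝ and each ε > 0, μ({y ∈ Y : |f(y) − c| ≤ ε}) ≤ C_δ A ε^{δ}, where the constant C_δ depends only on δ. -/

import Mathlib

open MeasureTheory Real
open scoped ENNReal

noncomputable section

lemma sum_rpow_le (δ : ℝ) (hδ0 : 0 < δ) (hδ1 : δ < 1) (N : ℕ) :
    ∑ k ∈ Finset.range N, ((k : ℝ) + 1) ^ (-δ) ≤ (N : ℝ) ^ (1 - δ) / (1 - δ) := by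
  have h1δ : (0:ℝ) < 1 - δ := by linarith
  cases N with
  | zero => simp; positivity
  | succ m =>
    rw [Finset.sum_range_succ' (fun k => ((k : ℝ) + 1) ^ (-δ)) m]
    have tail : ∑ k ∈ Finset.range m, ((k : ℝ) + 1 + 1) ^ (-δ)
        ≤ (((m:ℝ)+1) ^ (1-δ) - 1) / (1 - δ) := by
      have hanti : AntitoneOn (fun x : ℝ => x ^ (-δ)) (Set.Icc 1 (1 + (m:ℕ))) := by
        intro x hx y hy hxy
        exact Real.rpow_le_rpow_of_nonpos (lt_of_lt_of_le one_pos hx.1) hxy (by linarith)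
      have := hanti.sum_le_integral
      have hint : ∫ x in (1:ℝ)..(1 + (m:ℕ)), x ^ (-δ)
          = ((1 + (m:ℝ)) ^ (-δ + 1) - 1 ^ (-δ + 1)) / (-δ + 1) := by
        rw [integral_rpow (Or.inl (by linarith))]
      rw [hint] at this
      calc ∑ k ∈ Finset.range m, ((k : ℝ) + 1 + 1) ^ (-δ)
          = ∑ i ∈ Finset.range m, ((1:ℝ) + ((i + 1 : ℕ):ℝ)) ^ (-δ) := by
            apply Finset.sum_congr rfl; intro i _; push_cast; ring_nf
        _ ≤ ((1 + (m:ℝ)) ^ (-δ + 1) - 1 ^ (-δ + 1)) / (-δ + 1) := this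
        _ = (((m:ℝ)+1) ^ (1-δ) - 1) / (1 - δ) := by
            rw [Real.one_rpow]; ring_nf
    simp only [Nat.cast_zero, zero_add, Real.one_rpow]
    have h1 : (1:ℝ) ≤ 1 / (1-δ) := by
      rw [le_div_iff₀ h1δ]; linarith
    push_cast
    rw [sub_div] at tail
    linarith

lemma inner_sum_le (δ : ℝ) (hδ0 : 0 < δ) (N j : ℕ) (hj : j < N) :
    ∑ l ∈ Finset.range N, (if j = l then 0 else |(j:ℝ) - l| ^ (-δ))
      ≤ 2 * ∑ k ∈ Finset.range N, ((k : ℝ) + 1) ^ (-δ) := by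
  set g : ℕ → ℝ := fun k => ((k : ℝ) + 1) ^ (-δ) with hg
  set w : ℕ → ℝ := fun l => if j = l then 0 else |(j:ℝ) - l| ^ (-δ) with hw
  have hgnn : ∀ k, 0 ≤ g k := fun k => Real.rpow_nonneg (by positivity) _
  have hK : ∀ m ≤ N, ∑ k ∈ Finset.range m, g k ≤ ∑ k ∈ Finset.range N, g k := by
    intro m hm
    exact Finset.sum_le_sum_of_subset_of_nonneg
      (Finset.range_subset_range.2 hm) (fun k _ _ => hgnn k)
  have split : ∑ l ∈ Finset.range N, w l
      = ∑ l ∈ Finset.range j, w l + ∑ l ∈ Finset.Ico j N, w l := by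
    rw [Finset.range_eq_Ico, ← Finset.sum_Ico_consecutive _ (Nat.zero_le j) hj.le]
    rw [Finset.range_eq_Ico]
  have hA : ∑ l ∈ Finset.range j, w l ≤ ∑ k ∈ Finset.range N, g k := by
    have : ∑ l ∈ Finset.range j, w l = ∑ l ∈ Finset.range j, g (j - 1 - l) := by
      apply Finset.sum_congr rfl
      intro l hl
      rw [Finset.mem_range] at hl
      have hne : j ≠ l := hl.ne'
      have h1 : j - 1 - l + 1 = j - l := by omega
      have h2 : ((j - l : ℕ) : ℝ) = (j:ℝ) - l := by
        push_cast [Nat.cast_sub hl.le]; ring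
      simp only [hw, hg, if_neg hne]
      rw [abs_of_pos (by rw [← h2]; exact_mod_cast Nat.sub_pos_of_lt hl)]
      rw [show ((j - 1 - l : ℕ):ℝ) + 1 = ((j - 1 - l + 1 : ℕ):ℝ) by push_cast; ring, h1, h2]
    rw [this, Finset.sum_range_reflect]
    exact hK j hj.le
  have hB : ∑ l ∈ Finset.Ico j N, w l ≤ ∑ k ∈ Finset.range N, g k := by
    rw [Finset.sum_eq_sum_Ico_succ_bot hj, Finset.sum_Ico_eq_sum_range]
    simp only [hw, if_pos rfl, zero_add]
    have heq : ∀ k ∈ Finset.range (N - (j+1)), w (j + 1 + k) = g k := by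
      intro k _
      have hne : j ≠ j + 1 + k := by omega
      simp only [hw, hg, if_neg hne]
      have habs : |(j:ℝ) - ((j + 1 + k : ℕ):ℝ)| = (k:ℝ) + 1 := by
        push_cast; rw [abs_of_nonpos (by linarith)]; ring
      rw [habs]
    rw [Finset.sum_congr rfl heq]
    exact hK _ (by omega)
  linarith [split, hA, hB]

lemma norm_exp_aux (t x : ℝ) : ‖Complex.exp (Complex.I * (t:ℂ) * (x:ℂ))‖ = 1 := by
  rw [Complex.norm_exp]
  have : (Complex.I * (t:ℂ) * (x:ℂ)).re = 0 := by simp [Complex.mul_re, Complex.mul_im]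
  rw [this, Real.exp_zero]

lemma re_exp_aux (t x : ℝ) : (Complex.exp (Complex.I * (t:ℂ) * (x:ℂ))).re = Real.cos (t * x) := by
  rw [show Complex.I * (t:ℂ) * (x:ℂ) = ((t * x : ℝ) : ℂ) * Complex.I by push_cast; ring,
    Complex.exp_ofReal_mul_I_re]

lemma integrable_exp_aux {Y : Type} [MeasurableSpace Y] (μ : Measure Y) [IsFiniteMeasure μ]
    {g : Y → ℝ} (hg : Measurable g) (t : ℝ) :
    Integrable (fun y => Complex.exp (Complex.I * (t:ℂ) * (g y:ℂ))) μ := by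
  refine ⟨?_, HasFiniteIntegral.of_bounded (C := 1) (Filter.Eventually.of_forall fun y => ?_)⟩
  · exact (Complex.measurable_exp.comp
      (measurable_const.mul (Complex.measurable_ofReal.comp hg))).aestronglyMeasurable
  · exact le_of_eq (norm_exp_aux t (g y))

lemma main_est (δ : ℝ) (hδ0 : 0 < δ) (hδ1 : δ < 1)
    {Y : Type} [MeasurableSpace Y] (μ : Measure Y) [IsFiniteMeasure μ]
    {g : Y → ℝ} (hg : Measurable g) (A : ℝ) (hA : 0 < A)
    (hb : ∀ lam : ℝ, lam ≠ 0 →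
      ‖∫ y, Complex.exp (Complex.I * (lam : ℂ) * (g y : ℂ)) ∂μ‖ ≤ A * |lam| ^ (-δ))
    (ε : ℝ) (hε : 0 < ε) (N : ℕ) (hN : 1 ≤ N) :
    ((N:ℝ)^2/4) * (μ {y | |g y| ≤ ε}).toReal
      ≤ N * (μ Set.univ).toReal + 2*A*ε^δ*(N:ℝ)^2/(1-δ) := by
  have h1δ : (0:ℝ) < 1 - δ := by linarith
  have hNR : (0:ℝ) < N := by exact_mod_cast hN
  set s : ℝ := ((N:ℝ) * ε)⁻¹ with hs_def
  have hs : 0 < s := by positivity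
  set E : Set Y := {y | |g y| ≤ ε} with hE_def
  have hEmeas : MeasurableSet E := measurableSet_le (hg.abs) measurable_const
  set S : Y → ℂ := fun y => ∑ j ∈ Finset.range N,
    Complex.exp (Complex.I * (((j:ℝ) * s : ℝ):ℂ) * (g y:ℂ)) with hS_def
  -- lower bound
  have hS_re : ∀ y ∈ E, (N:ℝ)/2 ≤ (S y).re := by
    intro y hy
    have hy' : |g y| ≤ ε := hy
    have : (S y).re = ∑ j ∈ Finset.range N, Real.cos ((j:ℝ) * s * g y) := by
      rw [hS_def]
      rw [Complex.re_sum]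
      exact Finset.sum_congr rfl fun j _ => re_exp_aux _ _
    rw [this]
    have : ∀ j ∈ Finset.range N, (1:ℝ)/2 ≤ Real.cos ((j:ℝ) * s * g y) := by
      intro j hj
      have hjN : (j:ℝ) ≤ N := by
        exact_mod_cast (Finset.mem_range.1 hj).le
      have habs : |(j:ℝ) * s * g y| ≤ 1 := by
        rw [abs_mul, abs_mul, abs_of_nonneg (by positivity : (0:ℝ) ≤ (j:ℝ)),
          abs_of_pos hs]
        calc (j:ℝ) * s * |g y| ≤ (N:ℝ) * s * ε := by
              apply mul_le_mul (mul_le_mul_of_nonneg_right hjN hs.le) hy'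
                (abs_nonneg _) (by positivity)
          _ = 1 := by rw [hs_def]; field_simp
        -- done
      have := Real.one_sub_sq_div_two_le_cos (x := (j:ℝ) * s * g y)
      nlinarith [sq_abs ((j:ℝ) * s * g y), sq_nonneg (|(j:ℝ) * s * g y| - 1),
        abs_nonneg ((j:ℝ) * s * g y)]
    calc (N:ℝ)/2 = ∑ _j ∈ Finset.range N, (1:ℝ)/2 := by
          rw [Finset.sum_const, Finset.card_range]; ring
      _ ≤ _ := Finset.sum_le_sum this
  have hSnormsq_int : Integrable (fun y => ‖S y‖^2) μ := by
    refine ⟨?_, HasFiniteIntegral.of_bounded (C := (N:ℝ)^2)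
      (Filter.Eventually.of_forall fun y => ?_)⟩
    · have hSm : Measurable S := by
        apply Finset.measurable_sum
        intro j _
        exact Complex.measurable_exp.comp
          (measurable_const.mul (Complex.measurable_ofReal.comp hg))
      exact ((hSm.norm.pow_const 2)).aestronglyMeasurable
    · have hSb : ‖S y‖ ≤ (N:ℝ) := by
        rw [hS_def]
        calc ‖∑ j ∈ Finset.range N, Complex.exp (Complex.I * (((j:ℝ) * s : ℝ):ℂ) * (g y:ℂ))‖
            ≤ ∑ j ∈ Finset.range N, ‖Complex.exp (Complex.I * (((j:ℝ) * s : ℝ):ℂ) * (g y:ℂ))‖ :=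
              norm_sum_le _ _
          _ = ∑ _j ∈ Finset.range N, (1:ℝ) :=
              Finset.sum_congr rfl fun j _ => norm_exp_aux _ _
          _ = (N:ℝ) := by simp
      rw [Real.norm_eq_abs, abs_of_nonneg (by positivity)]
      nlinarith [norm_nonneg (S y)]
  have lower : ((N:ℝ)^2/4) * (μ E).toReal ≤ ∫ y, ‖S y‖^2 ∂μ := by
    have h1 : ∫ _y in E, ((N:ℝ)^2/4) ∂μ = (μ E).toReal * ((N:ℝ)^2/4) := by
      rw [setIntegral_const]; simp [smul_eq_mul]; exact Or.inl rfl
    have h2 : ∫ y in E, ((N:ℝ)^2/4) ∂μ ≤ ∫ y in E, ‖S y‖^2 ∂μ := by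
      refine setIntegral_mono_on (integrableOn_const (measure_ne_top μ E))
        hSnormsq_int.integrableOn hEmeas fun y hy => ?_
      have h3 := hS_re y hy
      have h4 : (S y).re ≤ ‖S y‖ := by
        exact Complex.re_le_norm _
      nlinarith [hNR]
    have h5 : ∫ y in E, ‖S y‖^2 ∂μ ≤ ∫ y, ‖S y‖^2 ∂μ :=
      setIntegral_le_integral hSnormsq_int (Filter.Eventually.of_forall fun y => by positivity)
    rw [h1] at h2
    linarith [h2, h5]
  -- upper bound
  set I2 : ℕ → ℕ → ℂ := fun j l =>
    ∫ y, Complex.exp (Complex.I * ((((j:ℝ) - l) * s : ℝ):ℂ) * (g y:ℂ)) ∂μ with hI2_def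
  have hprod : ∀ y, S y * (starRingEnd ℂ) (S y) = ∑ j ∈ Finset.range N, ∑ l ∈ Finset.range N,
      Complex.exp (Complex.I * ((((j:ℝ) - l) * s : ℝ):ℂ) * (g y:ℂ)) := by
    intro y
    rw [hS_def]
    rw [map_sum, Finset.sum_mul_sum]
    refine Finset.sum_congr rfl fun j _ => Finset.sum_congr rfl fun l _ => ?_
    rw [← Complex.exp_conj, ← Complex.exp_add]
    congr 1
    have : (starRingEnd ℂ) (Complex.I * (((l:ℝ) * s : ℝ):ℂ) * ((g y:ℝ):ℂ))
        = -(Complex.I * (((l:ℝ) * s : ℝ):ℂ) * ((g y:ℝ):ℂ)) := by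
      simp [map_mul, Complex.conj_I, Complex.conj_ofReal]
      try ring
    rw [this]
    push_cast
    ring
  have expand : ∫ y, ‖S y‖^2 ∂μ
      = (∑ j ∈ Finset.range N, ∑ l ∈ Finset.range N, I2 j l).re := by
    have h1 : ∀ y, ‖S y‖^2 = (S y * (starRingEnd ℂ) (S y)).re := by
      intro y
      rw [Complex.mul_conj]
      simp [Complex.sq_norm]
    have hint : Integrable (fun y => S y * (starRingEnd ℂ) (S y)) μ := by
      have : (fun y => S y * (starRingEnd ℂ) (S y)) = fun y => ∑ j ∈ Finset.range N,
          ∑ l ∈ Finset.range N,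
          Complex.exp (Complex.I * ((((j:ℝ) - l) * s : ℝ):ℂ) * (g y:ℂ)) := by
        funext y; exact hprod y
      rw [this]
      exact integrable_finset_sum _ fun j _ => integrable_finset_sum _ fun l _ =>
        integrable_exp_aux μ hg _
    calc ∫ y, ‖S y‖^2 ∂μ = ∫ y, (S y * (starRingEnd ℂ) (S y)).re ∂μ := by
          exact integral_congr_ae (Filter.Eventually.of_forall fun y => h1 y)
      _ = (∫ y, S y * (starRingEnd ℂ) (S y) ∂μ).re := integral_re hint
      _ = (∑ j ∈ Finset.range N, ∑ l ∈ Finset.range N, I2 j l).re := by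
          congr 1
          rw [integral_congr_ae (Filter.Eventually.of_forall hprod)]
          rw [integral_finset_sum _ fun j _ => integrable_finset_sum _ fun l _ =>
            integrable_exp_aux μ hg _]
          exact Finset.sum_congr rfl fun j _ =>
            integral_finset_sum _ fun l _ => integrable_exp_aux μ hg _
  have hterm : ∀ j ∈ Finset.range N, ∀ l ∈ Finset.range N, ‖I2 j l‖
      ≤ (if j = l then (μ Set.univ).toReal else 0)
        + A * s^(-δ) * (if j = l then 0 else |(j:ℝ) - l| ^ (-δ)) := by
    intro j _ l _
    by_cases hjl : j = l
    · subst hjl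
      simp only [if_pos rfl, mul_zero, add_zero]
      have : I2 j j = (μ Set.univ).toReal • (1:ℂ) := by
        rw [hI2_def]
        simp
        rfl
      rw [this]
      simp [abs_of_nonneg ENNReal.toReal_nonneg]
    · simp only [if_neg hjl, zero_add]
      have hne : ((j:ℝ) - l) * s ≠ 0 := by
        apply mul_ne_zero _ hs.ne'
        have : (j:ℝ) ≠ l := by exact_mod_cast hjl
        exact sub_ne_zero_of_ne this
      have := hb (((j:ℝ) - l) * s) hne
      calc ‖I2 j l‖ ≤ A * |((j:ℝ) - l) * s| ^ (-δ) := this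
        _ = A * s^(-δ) * |(j:ℝ) - l| ^ (-δ) := by
            rw [abs_mul, abs_of_pos hs, Real.mul_rpow (abs_nonneg _) hs.le]
            ring
  have upper : ∫ y, ‖S y‖^2 ∂μ
      ≤ N * (μ Set.univ).toReal + 2*A*ε^δ*(N:ℝ)^2/(1-δ) := by
    rw [expand]
    have h1 : (∑ j ∈ Finset.range N, ∑ l ∈ Finset.range N, I2 j l).re
        ≤ ∑ j ∈ Finset.range N, ∑ l ∈ Finset.range N, ‖I2 j l‖ := by
      calc (∑ j ∈ Finset.range N, ∑ l ∈ Finset.range N, I2 j l).re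
          ≤ ‖∑ j ∈ Finset.range N, ∑ l ∈ Finset.range N, I2 j l‖ := by
            exact Complex.re_le_norm _
        _ ≤ ∑ j ∈ Finset.range N, ‖∑ l ∈ Finset.range N, I2 j l‖ := norm_sum_le _ _
        _ ≤ ∑ j ∈ Finset.range N, ∑ l ∈ Finset.range N, ‖I2 j l‖ :=
            Finset.sum_le_sum fun j _ => norm_sum_le _ _
    have h2 : ∑ j ∈ Finset.range N, ∑ l ∈ Finset.range N, ‖I2 j l‖
        ≤ N * (μ Set.univ).toReal
          + A * s^(-δ) * ∑ j ∈ Finset.range N, ∑ l ∈ Finset.range N,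
            (if j = l then 0 else |(j:ℝ) - l| ^ (-δ)) := by
      calc ∑ j ∈ Finset.range N, ∑ l ∈ Finset.range N, ‖I2 j l‖
          ≤ ∑ j ∈ Finset.range N, ∑ l ∈ Finset.range N,
            ((if j = l then (μ Set.univ).toReal else 0)
              + A * s^(-δ) * (if j = l then 0 else |(j:ℝ) - l| ^ (-δ))) :=
            Finset.sum_le_sum fun j hj => Finset.sum_le_sum fun l hl => hterm j hj l hl
        _ = ∑ j ∈ Finset.range N, ∑ l ∈ Finset.range N, (if j = l then (μ Set.univ).toReal else 0)
            + ∑ j ∈ Finset.range N, ∑ l ∈ Finset.range N,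
              A * s^(-δ) * (if j = l then 0 else |(j:ℝ) - l| ^ (-δ)) := by
            rw [← Finset.sum_add_distrib]
            exact Finset.sum_congr rfl fun j _ => Finset.sum_add_distrib
        _ = N * (μ Set.univ).toReal
            + A * s^(-δ) * ∑ j ∈ Finset.range N, ∑ l ∈ Finset.range N,
              (if j = l then 0 else |(j:ℝ) - l| ^ (-δ)) := by
            congr 1
            · have : ∀ j ∈ Finset.range N,
                  ∑ l ∈ Finset.range N, (if j = l then (μ Set.univ).toReal else 0)
                    = (μ Set.univ).toReal := by
                intro j hj
                rw [Finset.sum_ite_eq]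
                exact if_pos hj
              rw [Finset.sum_congr rfl this, Finset.sum_const, Finset.card_range,
                nsmul_eq_mul]
            · rw [Finset.mul_sum]
              exact Finset.sum_congr rfl fun j _ => (Finset.mul_sum _ _ _).symm
    have h3 : ∑ j ∈ Finset.range N, ∑ l ∈ Finset.range N,
        (if j = l then 0 else |(j:ℝ) - l| ^ (-δ)) ≤ 2 * N * ((N:ℝ)^(1-δ)/(1-δ)) := by
      calc ∑ j ∈ Finset.range N, ∑ l ∈ Finset.range N,
          (if j = l then 0 else |(j:ℝ) - l| ^ (-δ))
          ≤ ∑ _j ∈ Finset.range N, 2 * ∑ k ∈ Finset.range N, ((k : ℝ) + 1) ^ (-δ) :=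
            Finset.sum_le_sum fun j hj => inner_sum_le δ hδ0 N j (Finset.mem_range.1 hj)
        _ = N * (2 * ∑ k ∈ Finset.range N, ((k : ℝ) + 1) ^ (-δ)) := by
            rw [Finset.sum_const, Finset.card_range, nsmul_eq_mul]
        _ ≤ N * (2 * ((N:ℝ)^(1-δ)/(1-δ))) := by
            have := sum_rpow_le δ hδ0 hδ1 N
            have h2N : (0:ℝ) ≤ N := hNR.le
            nlinarith
        _ = 2 * N * ((N:ℝ)^(1-δ)/(1-δ)) := by ring
    have hs_pow : s^(-δ) = (N:ℝ)^δ * ε^δ := by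
      rw [hs_def, Real.inv_rpow (by positivity), Real.rpow_neg (by positivity), inv_inv,
        Real.mul_rpow hNR.le hε.le]
    have h4 : A * s^(-δ) * (2 * N * ((N:ℝ)^(1-δ)/(1-δ))) = 2*A*ε^δ*(N:ℝ)^2/(1-δ) := by
      rw [hs_pow]
      have key : (N:ℝ)^δ * (N:ℝ)^(1-δ) = N := by
        rw [← Real.rpow_add hNR]
        norm_num
      have expand2 : A * ((N:ℝ)^δ * ε^δ) * (2 * N * ((N:ℝ)^(1-δ)/(1-δ)))
          = 2*A*ε^δ*((N:ℝ)^δ * (N:ℝ)^(1-δ))*(N:ℝ)/(1-δ) := by ring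
      rw [expand2, key]
      ring
    have h5 : 0 ≤ A * s^(-δ) := by positivity
    calc (∑ j ∈ Finset.range N, ∑ l ∈ Finset.range N, I2 j l).re
        ≤ ∑ j ∈ Finset.range N, ∑ l ∈ Finset.range N, ‖I2 j l‖ := h1
      _ ≤ N * (μ Set.univ).toReal + A * s^(-δ) * ∑ j ∈ Finset.range N, ∑ l ∈ Finset.range N,
            (if j = l then 0 else |(j:ℝ) - l| ^ (-δ)) := h2
      _ ≤ N * (μ Set.univ).toReal + A * s^(-δ) * (2 * N * ((N:ℝ)^(1-δ)/(1-δ))) := by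
          have := mul_le_mul_of_nonneg_left h3 h5
          linarith
      _ = N * (μ Set.univ).toReal + 2*A*ε^δ*(N:ℝ)^2/(1-δ) := by rw [h4]
  linarith [lower, upper]

/-- **Lemma 1.5** (Carbery–Christ–Wright / Green formulation). If `(Y,μ)` is a finite measure
space, `0 < δ < 1`, and `f : Y → ℝ` is measurable with
`|∫_Y e^{iλ f(y)} dμ(y)| ≤ A|λ|^{-δ}` for all nonzero real `λ`, then for every `c ∈ ℝ` and
`ε > 0` one has `μ({y : |f(y) - c| ≤ ε}) ≤ C_δ A ε^δ`, where `C_δ` depends only on `δ`. -/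
theorem lemma_1_5 (δ : ℝ) (hδ0 : 0 < δ) (hδ1 : δ < 1) :
    ∃ Cδ : ℝ, 0 < Cδ ∧
      ∀ (Y : Type) (_ : MeasurableSpace Y) (μ : Measure Y), IsFiniteMeasure μ →
        ∀ (f : Y → ℝ), Measurable f →
          ∀ (A : ℝ), 0 < A →
            (∀ lam : ℝ, lam ≠ 0 →
              ‖∫ y, Complex.exp (Complex.I * (lam : ℂ) * (f y : ℂ)) ∂μ‖ ≤ A * |lam| ^ (-δ)) →
            ∀ (c : ℝ) (ε : ℝ), 0 < ε →
              μ {y | |f y - c| ≤ ε} ≤ ENNReal.ofReal (Cδ * A * ε ^ δ) := by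
  have h1δ : (0:ℝ) < 1 - δ := by linarith
  refine ⟨8 / (1 - δ), by positivity, ?_⟩
  intro Y _ μ hfin f hf A hA hbound c ε hε
  haveI := hfin
  set g : Y → ℝ := fun y => f y - c with hg_def
  have hg : Measurable g := hf.sub measurable_const
  have hb : ∀ lam : ℝ, lam ≠ 0 →
      ‖∫ y, Complex.exp (Complex.I * (lam:ℂ) * (g y:ℂ)) ∂μ‖ ≤ A * |lam|^(-δ) := by
    intro lam hlam
    have heq : ∀ y, Complex.exp (Complex.I * (lam:ℂ) * (g y:ℂ))
        = Complex.exp (Complex.I * (lam:ℂ) * ((-c:ℝ):ℂ))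
          * Complex.exp (Complex.I * (lam:ℂ) * (f y:ℂ)) := by
      intro y
      rw [← Complex.exp_add]
      congr 1
      simp only [hg_def]
      push_cast
      ring
    rw [integral_congr_ae (Filter.Eventually.of_forall heq), integral_const_mul, norm_mul,
      norm_exp_aux lam (-c), one_mul]
    exact hbound lam hlam
  have hE : {y | |f y - c| ≤ ε} = {y | |g y| ≤ ε} := rfl
  rw [hE]
  have key : ∀ N : ℕ, 1 ≤ N → (μ {y | |g y| ≤ ε}).toReal
      ≤ 4 * (μ Set.univ).toReal / N + 8*A*ε^δ/(1-δ) := by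
    intro N hN
    have hmain := main_est δ hδ0 hδ1 μ hg A hA hb ε hε N hN
    have hNR : (0:ℝ) < N := by exact_mod_cast hN
    refine le_of_mul_le_mul_left ?_ (show (0:ℝ) < (N:ℝ)^2/4 by positivity)
    calc ((N:ℝ)^2/4) * (μ {y | |g y| ≤ ε}).toReal
        ≤ N * (μ Set.univ).toReal + 2*A*ε^δ*(N:ℝ)^2/(1-δ) := hmain
      _ = ((N:ℝ)^2/4) * (4 * (μ Set.univ).toReal / N + 8*A*ε^δ/(1-δ)) := by
          field_simp
          ring
  have final : (μ {y | |g y| ≤ ε}).toReal ≤ 8*A*ε^δ/(1-δ) := by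
    apply le_of_forall_pos_le_add
    intro η hη
    obtain ⟨N, hN⟩ := exists_nat_gt (max 1 (4 * (μ Set.univ).toReal / η))
    have hN1R : (1:ℝ) < N := lt_of_le_of_lt (le_max_left _ _) hN
    have hN1 : 1 ≤ N := by exact_mod_cast hN1R.le
    have hNR : (0:ℝ) < N := by linarith
    have h4 := key N hN1
    have h5 : 4 * (μ Set.univ).toReal / N < η := by
      have hgt : 4 * (μ Set.univ).toReal / η < N := lt_of_le_of_lt (le_max_right _ _) hN
      rw [div_lt_iff₀ hNR]
      rw [div_lt_iff₀ hη] at hgt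
      linarith
    linarith
  calc μ {y | |g y| ≤ ε}
      = ENNReal.ofReal (μ {y | |g y| ≤ ε}).toReal :=
        (ENNReal.ofReal_toReal (measure_ne_top μ _)).symm
    _ ≤ ENNReal.ofReal (8/(1-δ) * A * ε^δ) := by
        apply ENNReal.ofReal_le_ofReal
        calc (μ {y | |g y| ≤ ε}).toReal ≤ 8*A*ε^δ/(1-δ) := final
          _ = 8/(1-δ) * A * ε^δ := by ring
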